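/- Let k : ℝ → ℝ be a smooth function and m ∈ ℝ. If k satisfies the Euler–Lagrange equation k''' − 6·k·k' + 2·m·k' = 0, then the reduced curvature h := (1/2)(k − m/3) satisfies ((h')²)' = (4h³ − c·h)' for some constant; more precisely, there exist real constants g₂, g₃ such that (h')² = 4h³ − g₂h − g₃ on ℝ. -/

import Mathlib

theorem reduced_curvature_potential (k : ℝ → ℝ) (m : ℝ)
    (hk : ContDiff ℝ 3 k)
    (hEL : ∀ s : ℝ, iteratedDeriv 3 k s - 6 * k s * deriv k s + 2 * m * deriv k s = 0) :
    ∃ g₂ g₃ : ℝ, ∀ s : ℝ,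
      (deriv (fun t => (k t - m / 3) / 2) s) ^ 2 =
        4 * ((k s - m / 3) / 2) ^ 3 - g₂ * ((k s - m / 3) / 2) - g₃ := by
  have hk' : ContDiff ℝ 2 (deriv k) := by
    have h := (contDiff_succ_iff_deriv.mp (show ContDiff ℝ ((2:ℕ)+1) k from by exact_mod_cast hk)).2.2
    exact_mod_cast h
  have hk'' : ContDiff ℝ 1 (deriv (deriv k)) := by
    have h := (contDiff_succ_iff_deriv.mp (show ContDiff ℝ ((1:ℕ)+1) (deriv k) from by exact_mod_cast hk')).2.2
    exact_mod_cast h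
  have hd0 : Differentiable ℝ k := hk.differentiable (by norm_num)
  have hd1 : Differentiable ℝ (deriv k) := hk'.differentiable (by norm_num)
  have hd2 : Differentiable ℝ (deriv (deriv k)) := hk''.differentiable (by norm_num)
  have hit3 : ∀ s, iteratedDeriv 3 k s = deriv (deriv (deriv k)) s := by
    intro s
    simp [iteratedDeriv_succ, iteratedDeriv_zero]
  -- first integral: deriv (deriv k) - 3 k^2 + 2 m k is constant
  set ψ : ℝ → ℝ := fun s => deriv (deriv k) s - 3 * (k s) ^ 2 + 2 * m * k s with hψdef
  have hψderiv : ∀ s, HasDerivAt ψ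
      (deriv (deriv (deriv k)) s - 3 * (2 * k s * deriv k s) + 2 * m * deriv k s) s := by
    intro s
    have h1 : HasDerivAt (fun t => deriv (deriv k) t) (deriv (deriv (deriv k)) s) s :=
      (hd2 s).hasDerivAt
    have h2 : HasDerivAt (fun t => 3 * (k t) ^ 2) (3 * (2 * k s * deriv k s)) s := by
      have := ((hd0 s).hasDerivAt.pow 2).const_mul (3 : ℝ)
      simpa [mul_comm, mul_assoc, mul_left_comm] using this
    have h3 : HasDerivAt (fun t => 2 * m * k t) (2 * m * deriv k s) s :=
      (hd0 s).hasDerivAt.const_mul (2 * m)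
    exact (h1.sub h2).add h3
  have hψconst : ∀ s, ψ s = ψ 0 := by
    have : ∀ s, deriv ψ s = 0 := by
      intro s
      rw [(hψderiv s).deriv]
      have h := hEL s
      rw [hit3 s] at h
      linarith
    intro s
    exact is_const_of_deriv_eq_zero (fun t => (hψderiv t).differentiableAt) this s 0
  set C₁ : ℝ := ψ 0 with hC₁def
  -- second integral: (k')^2 - 2 k^3 + 2 m k^2 - 2 C₁ k is constant
  set φ : ℝ → ℝ := fun s =>
    (deriv k s) ^ 2 - 2 * (k s) ^ 3 + 2 * m * (k s) ^ 2 - 2 * C₁ * k s with hφdef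
  have hφderiv : ∀ s, HasDerivAt φ
      (2 * deriv k s * deriv (deriv k) s - 2 * (3 * (k s) ^ 2 * deriv k s)
        + 2 * m * (2 * k s * deriv k s) - 2 * C₁ * deriv k s) s := by
    intro s
    have h1 : HasDerivAt (fun t => (deriv k t) ^ 2) (2 * deriv k s * deriv (deriv k) s) s := by
      have := (hd1 s).hasDerivAt.fun_pow 2
      simpa [mul_comm, mul_assoc, mul_left_comm] using this
    have h2 : HasDerivAt (fun t => 2 * (k t) ^ 3) (2 * (3 * (k s) ^ 2 * deriv k s)) s := by
      have := ((hd0 s).hasDerivAt.fun_pow 3).const_mul (2 : ℝ)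
      convert this using 1 <;> (try rfl) <;> push_cast <;> ring
    have h3 : HasDerivAt (fun t => 2 * m * (k t) ^ 2) (2 * m * (2 * k s * deriv k s)) s := by
      have := ((hd0 s).hasDerivAt.fun_pow 2).const_mul (2 * m)
      convert this using 1 <;> (try rfl) <;> push_cast <;> ring
    have h4 : HasDerivAt (fun t => 2 * C₁ * k t) (2 * C₁ * deriv k s) s :=
      (hd0 s).hasDerivAt.const_mul (2 * C₁)
    exact ((h1.sub h2).add h3).sub h4
  have hφconst : ∀ s, φ s = φ 0 := by
    have : ∀ s, deriv φ s = 0 := by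
      intro s
      rw [(hφderiv s).deriv]
      have h := hψconst s
      simp only [hψdef] at h
      linear_combination 2 * deriv k s * h
    intro s
    exact is_const_of_deriv_eq_zero (fun t => (hφderiv t).differentiableAt) this s 0
  set C₂ : ℝ := φ 0 with hC₂def
  refine ⟨m ^ 2 / 3 - C₁, m ^ 3 / 27 - m * C₁ / 6 - C₂ / 4, fun s => ?_⟩
  have hder : deriv (fun t => (k t - m / 3) / 2) s = deriv k s / 2 := by
    rw [deriv_div_const, deriv_sub_const]
  rw [hder]
  have h := hφconst s
  simp only [hφdef] at h
  linear_combination h / 4
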